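/- The complete graph K₄ does not admit an (r,2)-NZF for any r < 1+√2; i.e. φ₂(K₄) = 1+√2. -/

import Mathlib

open scoped BigOperators

noncomputable section

/-- The vector `(x, y)` in the Euclidean plane `ℝ²`. -/
def vec2 (x y : ℝ) : EuclideanSpace ℝ (Fin 2) := (WithLp.equiv 2 (Fin 2 → ℝ)).symm ![x, y]

/-- `f` is a `d`-dimensional nowhere-zero `r`-flow ((r,d)-NZF) on the graph `G`.
We encode an orientation together with a flow as a skew-symmetric function on ordered
pairs of vertices, supported on adjacent pairs, whose values (on edges) have Euclidean
norm in `[1, r-1]`, and which satisfies Kirchhoff's law at every vertex. -/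
def IsNZF {V : Type} [Fintype V] (G : SimpleGraph V) (d : ℕ) (r : ℝ)
    (f : V → V → EuclideanSpace ℝ (Fin d)) : Prop :=
  (∀ u v, f u v = - f v u) ∧
  (∀ u v, ¬ G.Adj u v → f u v = 0) ∧
  (∀ u v, G.Adj u v → 1 ≤ ‖f u v‖ ∧ ‖f u v‖ ≤ r - 1) ∧
  (∀ v, ∑ u, f v u = 0)

/-- `G` admits an `(r,d)`-NZF. -/
def HasNZF {V : Type} [Fintype V] (G : SimpleGraph V) (d : ℕ) (r : ℝ) : Prop :=
  ∃ f, IsNZF G d r f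

/-- A graph is bridgeless if none of its edges is a bridge. -/
def Bridgeless {V : Type} (G : SimpleGraph V) : Prop :=
  ∀ e ∈ G.edgeSet, ¬ G.IsBridge e

private lemma keyIneq (A B D P q R : ℝ)
    (hP1 : A + B - 2 < 2*P) (hP2 : 2*P ≤ A + B - 1)
    (hR1 : B + D - 2 < 2*R) (hR2 : 2*R ≤ B + D - 1)
    (hq1 : A + D - 2 < 2*q) (hq2 : 2*q ≤ A + D - 1)
    (hA1 : 1 ≤ A) (hA2 : A < 2) (hB1 : 1 ≤ B) (hB2 : B < 2)
    (hD1 : 1 ≤ D) (hD2 : D < 2)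
    (hG : A*B*D + 2*P*q*R - A*R^2 - B*q^2 - D*P^2 = 0) : False := by
  have huA : (0:ℝ) ≤ A - 1 := by linarith
  have hsA : (0:ℝ) < 2 - A := by linarith
  have huB : (0:ℝ) ≤ B - 1 := by linarith
  have hsB : (0:ℝ) < 2 - B := by linarith
  have huD : (0:ℝ) ≤ D - 1 := by linarith
  have hsD : (0:ℝ) < 2 - D := by linarith
  have hv1 : (0:ℝ) < 2*P - A - B + 2 := by linarith
  have hv2 : (0:ℝ) ≤ A + B - 1 - 2*P := by linarith
  have hw1 : (0:ℝ) < 2*R - B - D + 2 := by linarith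
  have hw2 : (0:ℝ) ≤ B + D - 1 - 2*R := by linarith
  have hz1 : (0:ℝ) < 2*q - A - D + 2 := by linarith
  have hz2 : (0:ℝ) ≤ A + D - 1 - 2*q := by linarith
  have t0 : 0 < (2 - A)*(2 - B)*(2 - D) := mul_pos (mul_pos hsA hsB) hsD
  have t1 : 0 ≤ (2 - A)*(B + D - 1 - 2*R) := mul_nonneg hsA.le hw2
  have t2 : 0 ≤ (2 - B)*(A + D - 1 - 2*q) := mul_nonneg hsB.le hz2
  have t3 : 0 ≤ (2 - D)*(A + B - 1 - 2*P) := mul_nonneg hsD.le hv2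
  have t4 : 0 ≤ (A - 1)*(2 - A) := mul_nonneg huA hsA.le
  have t5 : 0 ≤ (A - 1)*(2 - A)*(B + D - 1 - 2*R) := mul_nonneg (mul_nonneg huA hsA.le) hw2
  have t6 : 0 ≤ (A - 1)*(2 - B)*(A + B - 1 - 2*P) := mul_nonneg (mul_nonneg huA hsB.le) hv2
  have t7 : 0 ≤ (A - 1)*(2 - D)*(A + D - 1 - 2*q) := mul_nonneg (mul_nonneg huA hsD.le) hz2
  have t8 : 0 ≤ (A - 1)*(B - 1)*(D - 1) := mul_nonneg (mul_nonneg huA huB) huD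
  have t9 : 0 ≤ (A - 1)*(B - 1)*(B + D - 1 - 2*R) := mul_nonneg (mul_nonneg huA huB) hw2
  have t10 : 0 ≤ (A - 1)*(B - 1)*(A + D - 1 - 2*q) := mul_nonneg (mul_nonneg huA huB) hz2
  have t11 : 0 ≤ (A - 1)*(D - 1)*(A + B - 1 - 2*P) := mul_nonneg (mul_nonneg huA huD) hv2
  have t12 : 0 ≤ (A - 1)*(D - 1)*(B + D - 1 - 2*R) := mul_nonneg (mul_nonneg huA huD) hw2
  have t13 : 0 ≤ (A - 1)*(A + B - 1 - 2*P)*(B + D - 1 - 2*R) := mul_nonneg (mul_nonneg huA hv2) hw2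
  have t14 : 0 ≤ (A - 1)*(2*R - B - D + 2) := mul_nonneg huA hw1.le
  have t15 : 0 ≤ (A - 1)*(2*R - B - D + 2)*(B + D - 1 - 2*R) := mul_nonneg (mul_nonneg huA hw1.le) hw2
  have t16 : 0 ≤ (A - 1)*(B + D - 1 - 2*R)*(A + D - 1 - 2*q) := mul_nonneg (mul_nonneg huA hw2) hz2
  have t17 : 0 ≤ (B - 1)*(2 - B) := mul_nonneg huB hsB.le
  have t18 : 0 ≤ (B - 1)*(2 - B)*(A + D - 1 - 2*q) := mul_nonneg (mul_nonneg huB hsB.le) hz2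
  have t19 : 0 ≤ (B - 1)*(2 - D)*(B + D - 1 - 2*R) := mul_nonneg (mul_nonneg huB hsD.le) hw2
  have t20 : 0 ≤ (B - 1)*(D - 1)*(A + B - 1 - 2*P) := mul_nonneg (mul_nonneg huB huD) hv2
  have t21 : 0 ≤ (B - 1)*(D - 1)*(A + D - 1 - 2*q) := mul_nonneg (mul_nonneg huB huD) hz2
  have t22 : 0 ≤ (B - 1)*(A + B - 1 - 2*P) := mul_nonneg huB hv2
  have t23 : 0 ≤ (B - 1)*(A + B - 1 - 2*P)*(A + D - 1 - 2*q) := mul_nonneg (mul_nonneg huB hv2) hz2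
  have t24 : 0 ≤ (B - 1)*(B + D - 1 - 2*R)*(A + D - 1 - 2*q) := mul_nonneg (mul_nonneg huB hw2) hz2
  have t25 : 0 ≤ (B - 1)*(2*q - A - D + 2) := mul_nonneg huB hz1.le
  have t26 : 0 ≤ (B - 1)*(2*q - A - D + 2)*(A + D - 1 - 2*q) := mul_nonneg (mul_nonneg huB hz1.le) hz2
  have t27 : 0 ≤ (D - 1)*(2 - D) := mul_nonneg huD hsD.le
  have t28 : 0 ≤ (D - 1)*(2 - D)*(A + B - 1 - 2*P) := mul_nonneg (mul_nonneg huD hsD.le) hv2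
  have t29 : 0 ≤ (D - 1)*(2*P - A - B + 2) := mul_nonneg huD hv1.le
  have t30 : 0 ≤ (D - 1)*(2*P - A - B + 2)*(A + B - 1 - 2*P) := mul_nonneg (mul_nonneg huD hv1.le) hv2
  have t31 : 0 ≤ (D - 1)*(A + B - 1 - 2*P)*(B + D - 1 - 2*R) := mul_nonneg (mul_nonneg huD hv2) hw2
  have t32 : 0 ≤ (D - 1)*(A + B - 1 - 2*P)*(A + D - 1 - 2*q) := mul_nonneg (mul_nonneg huD hv2) hz2
  have t33 : 0 ≤ (D - 1)*(B + D - 1 - 2*R) := mul_nonneg huD hw2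
  have t34 : 0 ≤ (D - 1)*(A + D - 1 - 2*q) := mul_nonneg huD hz2
  have t35 : 0 ≤ (2*P - A - B + 2)*(A + B - 1 - 2*P) := mul_nonneg hv1.le hv2
  have t36 : 0 ≤ (2*P - A - B + 2)*(2*R - B - D + 2)*(2*q - A - D + 2) := mul_nonneg (mul_nonneg hv1.le hw1.le) hz1.le
  have t37 : 0 ≤ (2*R - B - D + 2)*(B + D - 1 - 2*R) := mul_nonneg hw1.le hw2
  have t38 : 0 ≤ (2*q - A - D + 2)*(A + D - 1 - 2*q) := mul_nonneg hz1.le hz2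
  linarith

private lemma norm_sq_two (v : EuclideanSpace ℝ (Fin 2)) : ‖v‖^2 = v 0^2 + v 1^2 := by
  rw [EuclideanSpace.norm_eq, Real.sq_sqrt (by positivity)]
  simp [Fin.sum_univ_two, Real.norm_eq_abs, sq_abs]

private lemma bounds_of {r : ℝ} (hr : r < 1 + Real.sqrt 2) (v : EuclideanSpace ℝ (Fin 2))
    (h1 : 1 ≤ ‖v‖) (h2 : ‖v‖ ≤ r - 1) :
    1 ≤ v 0^2 + v 1^2 ∧ v 0^2 + v 1^2 < 2 := by
  have hs : Real.sqrt 2 ^ 2 = 2 := Real.sq_sqrt (by norm_num)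
  have hlt : ‖v‖ < Real.sqrt 2 := by linarith
  have h0 : (0:ℝ) ≤ ‖v‖ := norm_nonneg v
  constructor
  · rw [← norm_sq_two]; nlinarith
  · rw [← norm_sq_two]; nlinarith [Real.sqrt_nonneg 2]

private lemma norm_vec2 (x y : ℝ) : ‖vec2 x y‖ = Real.sqrt (x^2 + y^2) := by
  rw [EuclideanSpace.norm_eq]
  congr 1
  simp [vec2, Fin.sum_univ_two, Real.norm_eq_abs, sq_abs]

private lemma vec2_zero : vec2 0 0 = 0 := by
  ext i
  fin_cases i <;> rfl

private lemma vec2_add (x y x' y' : ℝ) : vec2 x y + vec2 x' y' = vec2 (x + x') (y + y') := by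
  ext i
  fin_cases i <;> rfl

private lemma vec2_neg (x y : ℝ) : vec2 (-x) (-y) = - vec2 x y := by
  ext i
  fin_cases i <;> rfl

private lemma vecbound {x y : ℝ} (h1 : 1 ≤ x^2 + y^2) (h2 : x^2 + y^2 ≤ 2) :
    1 ≤ ‖vec2 x y‖ ∧ ‖vec2 x y‖ ≤ 1 + Real.sqrt 2 - 1 := by
  rw [norm_vec2]
  constructor
  · calc (1:ℝ) = Real.sqrt 1 := by simp
      _ ≤ Real.sqrt (x^2 + y^2) := Real.sqrt_le_sqrt h1
  · have h := Real.sqrt_le_sqrt h2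
    linarith

private def Mx : Fin 4 → Fin 4 → ℝ :=
  ![![0, 1, -1, 0], ![-1, 0, 0, 1], ![1, 0, 0, -1], ![0, -1, 1, 0]]

private def Nx : Fin 4 → Fin 4 → ℝ :=
  ![![0, 0, -1, 1], ![0, 0, 1, -1], ![1, -1, 0, 0], ![-1, 1, 0, 0]]

/-- `K₄` admits no `(r,2)`-NZF for `r < 1 + √2`, while it does admit a `(1+√2, 2)`-NZF;
i.e. `φ₂(K₄) = 1 + √2`. -/
theorem stmt_9 :
    (∀ r : ℝ, r < 1 + Real.sqrt 2 → ¬ HasNZF (SimpleGraph.completeGraph (Fin 4)) 2 r) ∧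
    HasNZF (SimpleGraph.completeGraph (Fin 4)) 2 (1 + Real.sqrt 2) := by
  constructor
  · rintro r hr ⟨f, hskew, hzero, hbd, hsum⟩
    have hadj : ∀ u v : Fin 4, u ≠ v → (SimpleGraph.completeGraph (Fin 4)).Adj u v := by
      intro u v h
      simpa [SimpleGraph.completeGraph] using h
    -- coordinate equalities from Kirchhoff and skew-symmetry
    have hself : ∀ v : Fin 4, f v v = 0 := fun v => hzero v v (by simp [SimpleGraph.completeGraph])
    have hcoord : ∀ (v : Fin 4) (i : Fin 2),
        f v 0 i + f v 1 i + f v 2 i + f v 3 i = 0 := by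
      intro v i
      have h := hsum v
      rw [Fin.sum_univ_four] at h
      have := congrArg (fun w : EuclideanSpace ℝ (Fin 2) => w i) h
      simpa [PiLp.add_apply] using this
    have hsk : ∀ (u v : Fin 4) (i : Fin 2), f u v i = - f v u i := by
      intro u v i
      have := congrArg (fun w : EuclideanSpace ℝ (Fin 2) => w i) (hskew u v)
      simpa [PiLp.neg_apply] using this
    have hselfc : ∀ (v : Fin 4) (i : Fin 2), f v v i = 0 := by
      intro v i
      have := congrArg (fun w : EuclideanSpace ℝ (Fin 2) => w i) (hself v)
      simpa using this
    -- the six edge vectors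
    obtain ⟨hA1, hA2⟩ := bounds_of hr (f 0 1) (hbd 0 1 (hadj 0 1 (by decide))).1
      (hbd 0 1 (hadj 0 1 (by decide))).2
    obtain ⟨hB1, hB2⟩ := bounds_of hr (f 0 2) (hbd 0 2 (hadj 0 2 (by decide))).1
      (hbd 0 2 (hadj 0 2 (by decide))).2
    obtain ⟨hD1, hD2⟩ := bounds_of hr (f 1 2) (hbd 1 2 (hadj 1 2 (by decide))).1
      (hbd 1 2 (hadj 1 2 (by decide))).2
    obtain ⟨hC1, hC2⟩ := bounds_of hr (f 0 3) (hbd 0 3 (hadj 0 3 (by decide))).1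
      (hbd 0 3 (hadj 0 3 (by decide))).2
    obtain ⟨hE1, hE2⟩ := bounds_of hr (f 1 3) (hbd 1 3 (hadj 1 3 (by decide))).1
      (hbd 1 3 (hadj 1 3 (by decide))).2
    obtain ⟨hG1, hG2⟩ := bounds_of hr (f 2 3) (hbd 2 3 (hadj 2 3 (by decide))).1
      (hbd 2 3 (hadj 2 3 (by decide))).2
    -- express the last three edges via the first three
    have hc : ∀ i : Fin 2, f 0 3 i = -(f 0 1 i + f 0 2 i) := by
      intro i
      have h := hcoord 0 i
      have h0 := hselfc 0 i
      linarith
    have he : ∀ i : Fin 2, f 1 3 i = f 0 1 i - f 1 2 i := by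
      intro i
      have h := hcoord 1 i
      have h0 := hselfc 1 i
      have h1 := hsk 1 0 i
      linarith
    have hg : ∀ i : Fin 2, f 2 3 i = f 0 2 i + f 1 2 i := by
      intro i
      have h := hcoord 2 i
      have h0 := hselfc 2 i
      have h1 := hsk 2 0 i
      have h2 := hsk 2 1 i
      linarith
    rw [hc 0, hc 1] at hC1 hC2
    rw [he 0, he 1] at hE1 hE2
    rw [hg 0, hg 1] at hG1 hG2
    set a0 := f 0 1 0 with ha0
    set a1 := f 0 1 1 with ha1
    set b0 := f 0 2 0 with hb0
    set b1 := f 0 2 1 with hb1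
    set d0 := f 1 2 0 with hd0
    set d1 := f 1 2 1 with hd1
    have hP1' : (a0^2 + a1^2) + (b0^2 + b1^2) - 2 < 2 * (-(a0*b0 + a1*b1)) := by linarith [hC2]
    have hP2' : 2 * (-(a0*b0 + a1*b1)) ≤ (a0^2 + a1^2) + (b0^2 + b1^2) - 1 := by linarith [hC1]
    have hR1' : (b0^2 + b1^2) + (d0^2 + d1^2) - 2 < 2 * (-(b0*d0 + b1*d1)) := by linarith [hG2]
    have hR2' : 2 * (-(b0*d0 + b1*d1)) ≤ (b0^2 + b1^2) + (d0^2 + d1^2) - 1 := by linarith [hG1]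
    have hq1' : (a0^2 + a1^2) + (d0^2 + d1^2) - 2 < 2 * (a0*d0 + a1*d1) := by linarith [hE2]
    have hq2' : 2 * (a0*d0 + a1*d1) ≤ (a0^2 + a1^2) + (d0^2 + d1^2) - 1 := by linarith [hE1]
    have hGram : (a0^2 + a1^2)*(b0^2 + b1^2)*(d0^2 + d1^2)
        + 2*(-(a0*b0 + a1*b1))*(a0*d0 + a1*d1)*(-(b0*d0 + b1*d1))
        - (a0^2 + a1^2)*(-(b0*d0 + b1*d1))^2 - (b0^2 + b1^2)*(a0*d0 + a1*d1)^2
        - (d0^2 + d1^2)*(-(a0*b0 + a1*b1))^2 = 0 := by ring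
    exact keyIneq (a0^2 + a1^2) (b0^2 + b1^2) (d0^2 + d1^2)
      (-(a0*b0 + a1*b1)) (a0*d0 + a1*d1) (-(b0*d0 + b1*d1))
      hP1' hP2' hR1' hR2' hq1' hq2' hA1 hA2 hB1 hB2 hD1 hD2 hGram
  · refine ⟨fun u v => vec2 (Mx u v) (Nx u v), ?_, ?_, ?_, ?_⟩
    · intro u v
      rw [← vec2_neg]
      congr 1 <;> (fin_cases u <;> fin_cases v <;> norm_num [Mx, Nx])
    · intro u v h
      have huv : u = v := by
        by_contra hne
        exact h (by simpa [SimpleGraph.completeGraph] using hne)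
      subst huv
      have h1 : Mx u u = 0 := by fin_cases u <;> norm_num [Mx]
      have h2 : Nx u u = 0 := by fin_cases u <;> norm_num [Nx]
      show vec2 (Mx u u) (Nx u u) = 0
      rw [h1, h2]
      exact vec2_zero
    · intro u v h
      have hne : u ≠ v := by
        intro he
        subst he
        simp [SimpleGraph.completeGraph] at h
      fin_cases u <;> fin_cases v <;>
        first
          | exact absurd rfl hne
          | (refine vecbound ?_ ?_ <;> norm_num [Mx, Nx])
    · intro v
      rw [Fin.sum_univ_four]
      fin_cases v <;>
        (norm_num [Mx, Nx, vec2_add]; convert vec2_zero using 2 <;> simp)
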